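/- For every natural number d with d ≡ 3 (mod 4), the permutation σ_SWAP of ZMod d × ZMod d defined by σ_SWAP (m, n) = (n, m) does not belong to the subgroup of the permutation group of ZMod d × ZMod d generated by the two permutations σ_CNOT1 (m, n) = (m, n + m) and σ_CNOT2 (m, n) = (m + n, n); in particular, no finite composition of instances of the generalised CNOT gates realises the two-qudit SWAP gate in such dimensions. -/

import Mathlib

/-- The generalised CNOT1 gate as a permutation of `ZMod d × ZMod d`: `(m, n) ↦ (m, n + m)`. -/
def cnot1 (d : ℕ) : Equiv.Perm (ZMod d × ZMod d) where
  toFun p := (p.1, p.2 + p.1)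
  invFun p := (p.1, p.2 - p.1)
  left_inv p := by simp
  right_inv p := by simp

/-- The generalised CNOT2 gate as a permutation of `ZMod d × ZMod d`: `(m, n) ↦ (m + n, n)`. -/
def cnot2 (d : ℕ) : Equiv.Perm (ZMod d × ZMod d) where
  toFun p := (p.1 + p.2, p.2)
  invFun p := (p.1 - p.2, p.2)
  left_inv p := by simp
  right_inv p := by simp

/-- The two-qudit SWAP gate as a permutation of `ZMod d × ZMod d`: `(m, n) ↦ (n, m)`. -/
def swapGate (d : ℕ) : Equiv.Perm (ZMod d × ZMod d) := Equiv.prodComm _ _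

/-- Auxiliary predicate: a permutation is linear with determinant 1. -/
def IsSL2 (d : ℕ) (σ : Equiv.Perm (ZMod d × ZMod d)) : Prop :=
  ∃ a b c e : ZMod d, a * e - b * c = 1 ∧
    ∀ p : ZMod d × ZMod d, σ p = (a * p.1 + b * p.2, c * p.1 + e * p.2)

lemma isSL2_of_mem_closure (d : ℕ) (σ : Equiv.Perm (ZMod d × ZMod d))
    (hσ : σ ∈ Subgroup.closure ({cnot1 d, cnot2 d} :
      Set (Equiv.Perm (ZMod d × ZMod d)))) : IsSL2 d σ := by
  induction hσ using Subgroup.closure_induction with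
  | mem x hx =>
    rcases hx with h | h
    · exact ⟨1, 0, 1, 1, by ring, fun p => by subst h; simp [cnot1, add_comm]⟩
    · exact ⟨1, 1, 0, 1, by ring, fun p => by subst h; simp [cnot2, add_comm]⟩
  | one => exact ⟨1, 0, 0, 1, by ring, fun p => by simp⟩
  | mul x y _ _ hx hy =>
    obtain ⟨a, b, c, e, hdet, hfun⟩ := hx
    obtain ⟨a', b', c', e', hdet', hfun'⟩ := hy
    refine ⟨a * a' + b * c', a * b' + b * e', c * a' + e * c', c * b' + e * e',
      ?_, fun p => ?_⟩
    · linear_combination (a' * e' - b' * c') * hdet + hdet'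
    · show x (y p) = _
      rw [hfun' p, hfun]
      simp only [Prod.mk.injEq]
      constructor <;> ring
  | inv x _ hx =>
    obtain ⟨a, b, c, e, hdet, hfun⟩ := hx
    refine ⟨e, -b, -c, a, by linear_combination hdet, fun p => ?_⟩
    apply (x : Equiv.Perm (ZMod d × ZMod d)).injective
    show x (x⁻¹ p) = _
    rw [Equiv.Perm.coe_inv, Equiv.apply_symm_apply, hfun]
    obtain ⟨p1, p2⟩ := p
    simp only [Prod.mk.injEq]
    constructor <;> [linear_combination -p1 * hdet; linear_combination -p2 * hdet]

theorem swap_not_in_closure_cnots (d : ℕ) (hd : d % 4 = 3) :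
    swapGate d ∉ Subgroup.closure ({cnot1 d, cnot2 d} :
      Set (Equiv.Perm (ZMod d × ZMod d))) := by
  intro hmem
  obtain ⟨a, b, c, e, hdet, hfun⟩ := isSL2_of_mem_closure d _ hmem
  have h10 := hfun (1, 0)
  have h01 := hfun (0, 1)
  simp [swapGate, Prod.ext_iff] at h10 h01
  obtain ⟨ha, hc⟩ := h10
  obtain ⟨hb, he⟩ := h01
  rw [← ha, ← hb, ← hc, ← he] at hdet
  have h2 : (2 : ZMod d) = 0 := by linear_combination -hdet
  have : NeZero d := ⟨by omega⟩
  have := (ZMod.natCast_eq_zero_iff 2 d).mp (by exact_mod_cast h2)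
  have := Nat.le_of_dvd (by norm_num) this
  omega
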